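/- If f_1 is majorized by g_1 and f_2 is majorized by g_2, and g_1 and g_2 are shape-equivalent, then f_1 + f_2 is majorized by g_1 + g_2. -/

import Mathlib

open scoped BigOperators ENNReal Classical

namespace Paper

variable {p : ℕ}

/-- Convolution of two functions on `ZMod p`. -/
noncomputable def conv [NeZero p] (f g : ZMod p → ℝ) : ZMod p → ℝ :=
  fun k => ∑ i : ZMod p, f i * g (k - i)

/-- Iterated convolution of a list of functions (the delta mass at `0` is the
convolution identity used as the base of the fold). -/
noncomputable def convList [NeZero p] (l : List (ZMod p → ℝ)) : ZMod p → ℝ :=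
  l.foldr conv (fun k => if k = 0 then 1 else 0)

/-- The enumeration `0, +1, -1, +2, -2, ...` of `ZMod p`. -/
def plusSeq (p : ℕ) (n : ℕ) : ZMod p :=
  if n % 2 = 0 then -((n / 2 : ℕ) : ZMod p) else (((n + 1) / 2 : ℕ) : ZMod p)

/-- The enumeration `0, -1, +1, -2, +2, ...` of `ZMod p`. -/
def minusSeq (p : ℕ) (n : ℕ) : ZMod p := -(plusSeq p n)

/-- `fp` is the `+`-rearrangement of `f`: a permutation of the values of `f` that is
nonincreasing along the ordering `0, +1, -1, +2, -2, ...`. -/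
def IsPlusRearr (f fp : ZMod p → ℝ) : Prop :=
  (∃ σ : Equiv.Perm (ZMod p), fp = f ∘ σ) ∧
    ∀ n : ℕ, n + 1 < p → fp (plusSeq p (n + 1)) ≤ fp (plusSeq p n)

/-- `fm` is the `-`-rearrangement of `f`: a permutation of the values of `f` that is
nonincreasing along the ordering `0, -1, +1, -2, +2, ...`. -/
def IsMinusRearr (f fm : ZMod p → ℝ) : Prop :=
  (∃ σ : Equiv.Perm (ZMod p), fm = f ∘ σ) ∧
    ∀ n : ℕ, n + 1 < p → fm (minusSeq p (n + 1)) ≤ fm (minusSeq p n)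

/-- `f` is `△`-regular: its `+`-rearrangement is symmetric (so `f⁺ = f⁻`). -/
def TriangleRegular (f : ZMod p → ℝ) : Prop :=
  ∃ fp, IsPlusRearr f fp ∧ ∀ z, fp (-z) = fp z

/-- `f` is `□`-regular: `f⁺(z+1) = f⁻(z)` for all `z`. -/
def SquareRegular (f : ZMod p → ℝ) : Prop :=
  ∃ fp fm, IsPlusRearr f fp ∧ IsMinusRearr f fm ∧ ∀ z, fp (z + 1) = fm z

/-- probability mass function on `ZMod p`. -/
def IsPMF [NeZero p] (f : ZMod p → ℝ) : Prop :=
  (∀ i, 0 ≤ f i) ∧ ∑ i : ZMod p, f i = 1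

/-- Weak majorization: for every `r`, the sum of the `r` largest values of `f` is at most
the sum of the `r` largest values of `g` (expressed via subsets of each cardinality). -/
def WeakMaj [NeZero p] (f g : ZMod p → ℝ) : Prop :=
  ∀ s : Finset (ZMod p), ∃ t : Finset (ZMod p),
    t.card = s.card ∧ ∑ i ∈ s, f i ≤ ∑ i ∈ t, g i

/-- Majorization: weak majorization together with equality of total sums. -/
def Maj [NeZero p] (f g : ZMod p → ℝ) : Prop :=
  WeakMaj f g ∧ ∑ i : ZMod p, f i = ∑ i : ZMod p, g i

/-- `f` and `g` are shape-equivalent: there is a single ordering of the index set along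
which both are nonincreasing. -/
def ShapeEquiv [NeZero p] (f g : ZMod p → ℝ) : Prop :=
  ∃ e : Fin p ≃ ZMod p, (∀ m n : Fin p, m ≤ n → f (e n) ≤ f (e m)) ∧
    (∀ m n : Fin p, m ≤ n → g (e n) ≤ g (e m))

/-- Rényi entropy of order `α ∈ [0,∞]` of a pmf on `ZMod p`. -/
noncomputable def renyi [NeZero p] (α : ℝ≥0∞) (f : ZMod p → ℝ) : ℝ :=
  if α = 0 then Real.log ((Finset.univ.filter (fun i => f i ≠ 0)).card)
  else if α = 1 then ∑ i : ZMod p, Real.negMulLog (f i)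
  else if α = ⊤ then -Real.log (⨆ i : ZMod p, f i)
  else (1 - α.toReal)⁻¹ * Real.log (∑ i : ZMod p, f i ^ α.toReal)

lemma card_topSet [NeZero p] (e : Fin p ≃ ZMod p) (k : ℕ) (hk : k ≤ p) :
    (Finset.univ.filter (fun z => ((e.symm z : Fin p) : ℕ) < k)).card = k := by
  classical
  have himg : (Finset.univ.filter (fun z => ((e.symm z : Fin p) : ℕ) < k))
      = Finset.image e (Finset.univ.filter fun i : Fin p => (i : ℕ) < k) := by
    ext z
    simp only [Finset.mem_filter, Finset.mem_image, Finset.mem_univ, true_and]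
    constructor
    · intro h; exact ⟨e.symm z, h, e.apply_symm_apply z⟩
    · rintro ⟨i, hi, rfl⟩; simpa using hi
  rw [himg, Finset.card_image_of_injective _ e.injective]
  rw [Finset.card_filter]
  have : ∀ i : Fin p, (if (i : ℕ) < k then 1 else 0)
      = if (i : ℕ) ∈ Finset.range k then 1 else 0 := by
    intro i; simp
  calc (∑ i : Fin p, if (i : ℕ) < k then 1 else 0)
      = ∑ i : Fin p, (if (i : ℕ) ∈ Finset.range k then 1 else 0) := by
        exact Finset.sum_congr rfl fun i _ => this i
    _ = ∑ n ∈ Finset.range p, (if n ∈ Finset.range k then 1 else 0) := by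
        rw [Finset.sum_range fun n => if n ∈ Finset.range k then 1 else 0]
    _ = ((Finset.range p).filter (fun n => n ∈ Finset.range k)).card := by
        rw [Finset.card_filter]
    _ = k := by
        rw [Finset.filter_mem_eq_inter]
        have : Finset.range p ∩ Finset.range k = Finset.range k := by
          rw [Finset.inter_comm]
          exact Finset.range_subset_range.mpr hk |> Finset.inter_eq_left.mpr
        rw [this, Finset.card_range]

lemma sum_le_topSum [NeZero p] (g : ZMod p → ℝ) (e : Fin p ≃ ZMod p)
    (hmono : ∀ m n : Fin p, m ≤ n → g (e n) ≤ g (e m)) (t : Finset (ZMod p)) (k : ℕ)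
    (htk : t.card = k) (hk : k ≤ p) :
    ∑ i ∈ t, g i ≤ ∑ i ∈ Finset.univ.filter (fun z => ((e.symm z : Fin p) : ℕ) < k), g i := by
  classical
  set T := Finset.univ.filter (fun z => ((e.symm z : Fin p) : ℕ) < k) with hT
  have hTcard : T.card = k := card_topSet e k hk
  have hcard : (t \ T).card = (T \ t).card := by
    rw [Finset.card_sdiff_comm (by rw [htk, hTcard])]
  by_cases hB : (T \ t) = ∅
  · have hA : (t \ T) = ∅ := Finset.card_eq_zero.mp (by rw [hcard, hB]; simp)
    have hsub : t ⊆ T := by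
      intro x hx
      by_contra hxT
      have : x ∈ t \ T := Finset.mem_sdiff.mpr ⟨hx, hxT⟩
      simp [hA] at this
    have : t = T := Finset.eq_of_subset_of_card_le hsub (by rw [htk, hTcard])
    rw [this]
  · -- B nonempty, so k ≥ 1
    have hkpos : 0 < k := by
      rcases Finset.nonempty_of_ne_empty hB with ⟨y, hy⟩
      have : ((e.symm y : Fin p) : ℕ) < k := by
        have := (Finset.mem_sdiff.mp hy).1
        simpa [hT] using this
      omega
    have hklt : k - 1 < p := by omega
    set c : ℝ := g (e ⟨k - 1, hklt⟩) with hc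
    have hA_le : ∀ x ∈ t \ T, g x ≤ c := by
      intro x hx
      have hxT : x ∉ T := (Finset.mem_sdiff.mp hx).2
      have hge : k ≤ ((e.symm x : Fin p) : ℕ) := by
        by_contra h
        exact hxT (by simp [hT]; omega)
      have := hmono ⟨k - 1, hklt⟩ (e.symm x) (by simp [Fin.le_def]; omega)
      simpa [hc] using this
    have hB_ge : ∀ y ∈ T \ t, c ≤ g y := by
      intro y hy
      have hyT : y ∈ T := (Finset.mem_sdiff.mp hy).1
      have hlt : ((e.symm y : Fin p) : ℕ) < k := by simpa [hT] using hyT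
      have := hmono (e.symm y) ⟨k - 1, hklt⟩ (by simp [Fin.le_def]; omega)
      simpa [hc] using this
    have hsum1 : ∑ i ∈ t \ T, g i ≤ (t \ T).card • c :=
      Finset.sum_le_card_nsmul _ _ _ hA_le
    have hsum2 : (T \ t).card • c ≤ ∑ i ∈ T \ t, g i :=
      Finset.card_nsmul_le_sum _ _ _ hB_ge
    have key : ∑ i ∈ t \ T, g i ≤ ∑ i ∈ T \ t, g i := by
      calc ∑ i ∈ t \ T, g i ≤ (t \ T).card • c := hsum1
        _ = (T \ t).card • c := by rw [hcard]
        _ ≤ ∑ i ∈ T \ t, g i := hsum2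
    have h1 : ∑ i ∈ t, g i = ∑ i ∈ t ∩ T, g i + ∑ i ∈ t \ T, g i :=
      (Finset.sum_inter_add_sum_sdiff t T g).symm
    have h2 : ∑ i ∈ T, g i = ∑ i ∈ T ∩ t, g i + ∑ i ∈ T \ t, g i :=
      (Finset.sum_inter_add_sum_sdiff T t g).symm
    rw [h1, h2, Finset.inter_comm]
    exact add_le_add_right key _

/-- If `f₁ ≺ g₁`, `f₂ ≺ g₂` and `g₁, g₂` are shape-equivalent, then
`f₁ + f₂ ≺ g₁ + g₂`. -/
theorem maj_add (hp : p.Prime) [NeZero p] (f1 f2 g1 g2 : ZMod p → ℝ)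
    (hf1 : ∀ i, 0 ≤ f1 i) (hf2 : ∀ i, 0 ≤ f2 i)
    (hg1 : ∀ i, 0 ≤ g1 i) (hg2 : ∀ i, 0 ≤ g2 i)
    (h1 : Maj f1 g1) (h2 : Maj f2 g2) (hshape : ShapeEquiv g1 g2) :
    Maj (f1 + f2) (g1 + g2) := by
  classical
  obtain ⟨e, he1, he2⟩ := hshape
  constructor
  · intro s
    set k := s.card with hk
    have hkp : k ≤ p := by
      have := Finset.card_le_univ s
      simpa [Finset.card_univ, ZMod.card] using this
    obtain ⟨t1, ht1c, ht1⟩ := h1.1 s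
    obtain ⟨t2, ht2c, ht2⟩ := h2.1 s
    refine ⟨Finset.univ.filter (fun z => ((e.symm z : Fin p) : ℕ) < k), ?_, ?_⟩
    · rw [card_topSet e k hkp]
    · have e1 : ∑ i ∈ t1, g1 i ≤ _ := sum_le_topSum g1 e he1 t1 k ht1c hkp
      have e2 : ∑ i ∈ t2, g2 i ≤ _ := sum_le_topSum g2 e he2 t2 k ht2c hkp
      calc ∑ i ∈ s, (f1 + f2) i = ∑ i ∈ s, f1 i + ∑ i ∈ s, f2 i := by
            simp [Finset.sum_add_distrib]
        _ ≤ ∑ i ∈ t1, g1 i + ∑ i ∈ t2, g2 i := add_le_add ht1 ht2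
        _ ≤ (∑ i ∈ Finset.univ.filter (fun z => ((e.symm z : Fin p) : ℕ) < k), g1 i)
            + ∑ i ∈ Finset.univ.filter (fun z => ((e.symm z : Fin p) : ℕ) < k), g2 i :=
            add_le_add e1 e2
        _ = ∑ i ∈ Finset.univ.filter (fun z => ((e.symm z : Fin p) : ℕ) < k), (g1 + g2) i := by
            simp [Finset.sum_add_distrib]
  · simp only [Pi.add_apply, Finset.sum_add_distrib, h1.2, h2.2]

end Paper
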